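/- Let m ≥ 1 and let φ be a graded ring automorphism of S_m = ℤ[x₁,…,x_m]/⟨x₁²,…,x_m²⟩, i.e., a ring automorphism carrying the ℤ-span of x₁,…,x_m onto itself. Then there exist a permutation σ of {1,…,m} and signs ε₁,…,ε_m ∈ {1, −1} such that φ(x_i) = ε_i·x_{σ(i)} for all i. -/

import Mathlib

open MvPolynomial

/-- The defining ideal `⟨x₁²,…,x_m²⟩` of `S_m = H^*((ℂP¹)^m ; ℤ)`. -/
noncomputable def sqIdeal (m : ℕ) : Ideal (MvPolynomial (Fin m) ℤ) :=
  Ideal.span (Set.range fun i : Fin m => (X i) ^ 2)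

lemma coeff_sqIdeal {m : ℕ} {p : MvPolynomial (Fin m) ℤ} (hp : p ∈ sqIdeal m)
    (d : Fin m →₀ ℕ) (hd : ∀ i, d i ≤ 1) : coeff d p = 0 := by
  have h : ∀ q ∈ sqIdeal m, ∀ f : MvPolynomial (Fin m) ℤ, coeff d (f * q) = 0 := by
    intro q hq
    refine Submodule.span_induction ?_ ?_ ?_ ?_ hq
    · rintro _ ⟨k, rfl⟩ f
      rw [coeff_mul]
      refine Finset.sum_eq_zero fun ab hab => ?_
      rw [Finset.HasAntidiagonal.mem_antidiagonal] at hab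
      rw [coeff_X_pow]
      rw [if_neg, mul_zero]
      intro hb
      have : d k = ab.1 k + ab.2 k := by rw [← hab]; rfl
      have h2 : ab.2 k = 2 := by rw [← hb]; simp
      have := hd k
      omega
    · intro f; simp
    · intro a b _ _ ha hb f; rw [mul_add, coeff_add, ha, hb, add_zero]
    · intro g a _ ha f
      rw [smul_eq_mul, ← mul_assoc]; exact ha (f * g)
  have := h p hp 1
  rwa [one_mul] at this

lemma single_add_single_eq {m : ℕ} {p q j k : Fin m} (hpq : p ≠ q) :
    (Finsupp.single j 1 + Finsupp.single k 1 : Fin m →₀ ℕ)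
      = Finsupp.single p 1 + Finsupp.single q 1 ↔ (j = p ∧ k = q) ∨ (j = q ∧ k = p) := by
  constructor
  · intro h
    have hp := DFunLike.congr_fun h p
    have hq := DFunLike.congr_fun h q
    simp [Finsupp.single_apply, hpq, hpq.symm] at hp hq
    split_ifs at hp hq <;> first | omega | tauto
  · rintro (⟨rfl, rfl⟩ | ⟨rfl, rfl⟩)
    · rfl
    · rw [add_comm]

lemma coeff_single_lin {m : ℕ} (c : Fin m → ℤ) (k : Fin m) :
    coeff (Finsupp.single k 1) (∑ j, C (c j) * X j) = c k := by
  rw [coeff_sum]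
  have h : ∀ j : Fin m, coeff (Finsupp.single k 1) (C (c j) * X j)
      = if j = k then c j else 0 := by
    intro j
    rw [show (X j : MvPolynomial (Fin m) ℤ) = monomial (Finsupp.single j 1) 1 from rfl,
      C_mul_monomial, mul_one, coeff_monomial]
    exact if_congr (Finsupp.single_left_inj one_ne_zero) rfl rfl
  simp only [h, Finset.sum_ite_eq', Finset.mem_univ, if_true]

lemma coeff_pair_sq {m : ℕ} (c : Fin m → ℤ) {p q : Fin m} (hpq : p ≠ q) :
    coeff (Finsupp.single p 1 + Finsupp.single q 1) ((∑ j, C (c j) * X j) ^ 2)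
      = 2 * (c p * c q) := by
  have hterm : ∀ j k : Fin m, (C (c j) * X j) * (C (c k) * X k)
      = (monomial (Finsupp.single j 1 + Finsupp.single k 1) (c j * c k)
          : MvPolynomial (Fin m) ℤ) := by
    intro j k
    rw [show (X j : MvPolynomial (Fin m) ℤ) = monomial (Finsupp.single j 1) 1 from rfl,
      show (X k : MvPolynomial (Fin m) ℤ) = monomial (Finsupp.single k 1) 1 from rfl,
      C_mul_monomial, C_mul_monomial, monomial_mul, mul_one, mul_one]
  rw [sq, Finset.sum_mul_sum]
  simp only [hterm]
  simp only [coeff_sum, coeff_monomial]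
  have hsplit : ∀ j k : Fin m,
      (if (Finsupp.single j 1 + Finsupp.single k 1 : Fin m →₀ ℕ)
          = Finsupp.single p 1 + Finsupp.single q 1 then c j * c k else 0)
        = (if j = p ∧ k = q then c j * c k else 0)
          + (if j = q ∧ k = p then c j * c k else 0) := by
    intro j k
    rw [if_congr (single_add_single_eq hpq) rfl rfl]
    by_cases h1 : j = p ∧ k = q <;> by_cases h2 : j = q ∧ k = p
    · exact absurd (h1.1.symm.trans h2.1) hpq
    · rw [if_pos (Or.inl h1), if_pos h1, if_neg h2, add_zero]
    · rw [if_pos (Or.inr h2), if_neg h1, if_pos h2, zero_add]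
    · rw [if_neg (by tauto), if_neg h1, if_neg h2, add_zero]
  simp only [hsplit, Finset.sum_add_distrib, ite_and]
  have key : ∀ a b : Fin m,
      (∑ x : Fin m, ∑ y : Fin m, if x = a then if y = b then c x * c y else 0 else 0)
        = c a * c b := by
    intro a b
    rw [Finset.sum_eq_single a (fun x _ hx => by simp [hx])
      (fun h => absurd (Finset.mem_univ _) h)]
    simp
  rw [key, key]
  ring

set_option maxHeartbeats 1000000 in
/-- Every graded ring automorphism of `S_m = ℤ[x₁,…,x_m]/⟨x₁²,…,x_m²⟩` (a ring automorphism
carrying the ℤ-span of `x₁,…,x_m` onto itself) is given by a permutation of the generators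
together with sign changes. -/
theorem stmt13 (m : ℕ) (hm : 1 ≤ m)
    (φ : (MvPolynomial (Fin m) ℤ ⧸ sqIdeal m) ≃+* (MvPolynomial (Fin m) ℤ ⧸ sqIdeal m))
    (hφ : Submodule.map φ.toRingHom.toIntAlgHom.toLinearMap
        (Submodule.span ℤ (Set.range fun i : Fin m => Ideal.Quotient.mk (sqIdeal m) (X i))) =
      Submodule.span ℤ (Set.range fun i : Fin m => Ideal.Quotient.mk (sqIdeal m) (X i))) :
    ∃ (σ : Equiv.Perm (Fin m)) (ε : Fin m → ℤ),
      (∀ i, ε i = 1 ∨ ε i = -1) ∧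
      ∀ i, φ (Ideal.Quotient.mk (sqIdeal m) (X i)) =
        ε i • Ideal.Quotient.mk (sqIdeal m) (X (σ i)) := by
  classical
  set π := Ideal.Quotient.mk (sqIdeal m) with hπ
  set x : Fin m → (MvPolynomial (Fin m) ℤ ⧸ sqIdeal m) := fun i => π (X i) with hx
  -- π of a linear combination
  have hPmap : ∀ c : Fin m → ℤ, π (∑ j, C (c j) * X j) = ∑ j, c j • x j := by
    intro c
    rw [map_sum]
    refine Finset.sum_congr rfl fun j _ => ?_
    rw [← smul_eq_C_mul]
    exact map_zsmul π _ _
  -- φ(x i) lies in the span, get coefficients A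
  have hmem : ∀ i, φ (x i) ∈
      Submodule.span ℤ (Set.range fun i : Fin m => π (X i)) := by
    intro i
    rw [← hφ]
    exact ⟨x i, Submodule.subset_span ⟨i, rfl⟩, rfl⟩
  have hA : ∀ i, ∃ c : Fin m → ℤ, ∑ j, c j • x j = φ (x i) := by
    intro i
    exact (Submodule.mem_span_range_iff_exists_fun ℤ).mp (hmem i)
  choose A hAspec using hA
  have hφx : ∀ i, φ (x i) = π (∑ j, C (A i j) * X j) := by
    intro i; rw [hPmap, hAspec]
  -- squares vanish: row orthogonality
  have hxsq : ∀ i, (x i) ^ 2 = 0 := by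
    intro i
    have : π (X i ^ 2) = 0 :=
      (Ideal.Quotient.eq_zero_iff_mem).mpr (Ideal.subset_span ⟨i, rfl⟩)
    show π (X i) ^ 2 = 0
    rw [← map_pow]
    exact this
  have hrow : ∀ i p q, p ≠ q → A i p * A i q = 0 := by
    intro i p q hpq
    have hmemsq : (∑ j, C (A i j) * X j) ^ 2 ∈ sqIdeal m := by
      rw [← Ideal.Quotient.eq_zero_iff_mem]
      have : (π ((∑ j, C (A i j) * X j))) ^ 2 = (φ (x i)) ^ 2 := by rw [hφx]
      rw [show (Ideal.Quotient.mk (sqIdeal m)) ((∑ j, C (A i j) * X j) ^ 2)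
          = (π (∑ j, C (A i j) * X j)) ^ 2 from map_pow _ _ 2, this,
        ← map_pow, hxsq, map_zero]
    have hd : ∀ t, (Finsupp.single p 1 + Finsupp.single q 1 : Fin m →₀ ℕ) t ≤ 1 := by
      intro t
      simp only [Finsupp.add_apply, Finsupp.single_apply]
      split_ifs with h1 h2 h2 <;> first | omega | (exact absurd (h1.trans h2.symm) hpq)
    have := coeff_sqIdeal hmemsq _ hd
    rw [coeff_pair_sq _ hpq] at this
    omega
  -- surjectivity: left inverse matrix
  have hsurj : ∀ j, ∃ c : Fin m → ℤ, ∀ k,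
      (if j = k then (1:ℤ) else 0) = ∑ i, c i * A i k := by
    intro j
    have : x j ∈ Submodule.map φ.toRingHom.toIntAlgHom.toLinearMap
        (Submodule.span ℤ (Set.range fun i : Fin m => π (X i))) := by
      rw [hφ]; exact Submodule.subset_span ⟨j, rfl⟩
    obtain ⟨v, hv, hφv⟩ := this
    obtain ⟨c, hc⟩ := (Submodule.mem_span_range_iff_exists_fun ℤ).mp hv
    refine ⟨c, fun k => ?_⟩
    have hxj : x j = π (∑ i, C (c i) * (∑ l, C (A i l) * X l)) := by
      have h1 : φ v = ∑ i, c i • φ (x i) := by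
        rw [← hc, map_sum]
        refine Finset.sum_congr rfl fun i _ => map_zsmul φ _ _
      have h2 : (∑ i, c i • φ (x i)) = π (∑ i, C (c i) * (∑ l, C (A i l) * X l)) := by
        rw [map_sum]
        refine Finset.sum_congr rfl fun i _ => ?_
        rw [hφx i, ← smul_eq_C_mul, map_zsmul]
      rw [← h2, ← h1, ← hφv]; rfl
    have hmem2 : (X j - ∑ i, C (c i) * (∑ l, C (A i l) * X l)) ∈ sqIdeal m := by
      rw [← Ideal.Quotient.eq_zero_iff_mem, map_sub, ← hπ, ← hxj]
      exact sub_self _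
    have hd : ∀ t, (Finsupp.single k 1 : Fin m →₀ ℕ) t ≤ 1 := by
      intro t; simp [Finsupp.single_apply]; split_ifs <;> omega
    have h0 := coeff_sqIdeal hmem2 _ hd
    rw [coeff_sub] at h0
    have hXj : coeff (Finsupp.single k 1) (X j : MvPolynomial (Fin m) ℤ)
        = if j = k then (1:ℤ) else 0 := by
      rw [show (X j : MvPolynomial (Fin m) ℤ) = monomial (Finsupp.single j 1) 1 from rfl,
        coeff_monomial]
      exact if_congr (Finsupp.single_left_inj one_ne_zero) rfl rfl
    have hS : coeff (Finsupp.single k 1) (∑ i, C (c i) * (∑ l, C (A i l) * X l))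
        = ∑ i, c i * A i k := by
      rw [coeff_sum]
      refine Finset.sum_congr rfl fun i _ => ?_
      rw [coeff_C_mul, coeff_single_lin]
    rw [hXj, hS] at h0
    omega
  choose Bc hBc using hsurj
  set M : Matrix (Fin m) (Fin m) ℤ := Matrix.of (fun i k => A i k) with hM
  set B : Matrix (Fin m) (Fin m) ℤ := Matrix.of (fun j i => Bc j i) with hB
  have hBM : B * M = 1 := by
    ext j k
    rw [Matrix.mul_apply, Matrix.one_apply]
    exact (hBc j k).symm
  have hMB : M * B = 1 := mul_eq_one_comm.mpr hBM
  have hMBapp : ∀ i k, ∑ j, A i j * Bc j k = if i = k then (1:ℤ) else 0 := by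
    intro i k
    have := congrFun (congrFun hMB i) k
    rwa [Matrix.mul_apply, Matrix.one_apply] at this
  -- pivots
  have hpiv : ∀ i, ∃ j, A i j ≠ 0 := by
    intro i
    by_contra h
    push_neg at h
    have := hMBapp i i
    simp only [if_pos rfl] at this
    rw [Finset.sum_eq_zero (fun j _ => by rw [h j, zero_mul])] at this
    exact one_ne_zero this.symm
  choose σ0 hσ0 using hpiv
  have hAzero : ∀ i j, j ≠ σ0 i → A i j = 0 := by
    intro i j hj
    rcases mul_eq_zero.mp (hrow i j (σ0 i) hj) with h | h
    · exact h
    · exact absurd h (hσ0 i)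
  have hsum1 : ∀ i k, ∑ j, A i j * Bc j k = A i (σ0 i) * Bc (σ0 i) k := by
    intro i k
    refine Finset.sum_eq_single (σ0 i) (fun j _ hj => by rw [hAzero i j hj, zero_mul])
      (fun h => absurd (Finset.mem_univ _) h)
  have hinj : Function.Injective σ0 := by
    intro i i' hii'
    by_contra hne
    have e1 : A i (σ0 i) * Bc (σ0 i) i = 1 := by
      have := hMBapp i i; rw [hsum1, if_pos rfl] at this; exact this
    have e2 : A i' (σ0 i) * Bc (σ0 i) i' = 1 := by
      have := hMBapp i' i'; rw [hsum1, if_pos rfl, ← hii'] at this; exact this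
    have e3 : A i' (σ0 i) * Bc (σ0 i) i = 0 := by
      have := hMBapp i' i
      rw [hsum1, ← hii', if_neg (fun h => hne h.symm)] at this
      exact this
    have hA' : A i' (σ0 i) ≠ 0 := left_ne_zero_of_mul_eq_one e2
    have hBz : Bc (σ0 i) i = 0 := by
      rcases mul_eq_zero.mp e3 with h | h
      · exact absurd h hA'
      · exact h
    rw [hBz, mul_zero] at e1
    exact zero_ne_one e1
  have hbij : Function.Bijective σ0 := Finite.injective_iff_bijective.mp hinj
  refine ⟨Equiv.ofBijective σ0 hbij, fun i => A i (σ0 i), fun i => ?_, fun i => ?_⟩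
  · have e1 : A i (σ0 i) * Bc (σ0 i) i = 1 := by
      have := hMBapp i i; rw [hsum1, if_pos rfl] at this; exact this
    exact Int.isUnit_iff.mp (IsUnit.of_mul_eq_one _ e1)
  · have : φ (x i) = ∑ j, A i j • x j := (hAspec i).symm
    rw [show Equiv.ofBijective σ0 hbij i = σ0 i from rfl]
    rw [this]
    refine Finset.sum_eq_single (σ0 i) (fun j _ hj => by rw [hAzero i j hj, zero_smul])
      (fun h => absurd (Finset.mem_univ _) h)
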